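/- Let (Ω, ℱ, P) be a probability space, let X : Ω → ℝ^m be a random vector with E‖X‖² < ∞, let w : Ω → ℝ be measurable with 0 ≤ w ≤ K almost surely for some constant K, and let g₀ > 0. Define Ω₀ = E[w² X Xᵀ], Σ₀ = g₀ E[w X Xᵀ], Ωm = E[X Xᵀ] and Σ = g₀ Ωm, and assume Ω₀ and Ωm are positive definite and Σ₀ is invertible. Then Σ₀⁻¹ Ω₀ Σ₀⁻¹ − Σ⁻¹ Ωm Σ⁻¹ is positive semidefinite. -/

import Mathlib

open MeasureTheory Matrix


section helpers
variable {Ω : Type*} [MeasurableSpace Ω] {P : Measure Ω} [IsProbabilityMeasure P]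
  {m : ℕ} {X : Ω → Fin m → ℝ}

lemma intble_entry (hX : Measurable X) (hX2 : Integrable (fun ω => ‖X ω‖ ^ 2) P)
    {c : Ω → ℝ} (hc : Measurable c) {M : ℝ} (hM : ∀ᵐ ω ∂P, |c ω| ≤ M) (i j : Fin m) :
    Integrable (fun ω => c ω * X ω i * X ω j) P := by
  refine (hX2.const_mul M).mono
    ((hc.mul ((measurable_pi_apply i).comp hX)).mul
      ((measurable_pi_apply j).comp hX)).aestronglyMeasurable ?_
  filter_upwards [hM] with ω hMω
  have hi : |X ω i| ≤ ‖X ω‖ := norm_le_pi_norm (X ω) i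
  have hj : |X ω j| ≤ ‖X ω‖ := norm_le_pi_norm (X ω) j
  have h0 : (0:ℝ) ≤ ‖X ω‖ := norm_nonneg _
  have hM0 : 0 ≤ M := le_trans (abs_nonneg _) hMω
  rw [Real.norm_eq_abs, Real.norm_eq_abs, abs_mul, abs_mul, abs_mul, abs_pow, abs_norm]
  calc |c ω| * |X ω i| * |X ω j| ≤ M * ‖X ω‖ * ‖X ω‖ := by
        apply mul_le_mul (mul_le_mul hMω hi (abs_nonneg _) hM0) hj (abs_nonneg _)
        positivity
    _ = M * ‖X ω‖ ^ 2 := by ring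
    _ ≤ |M| * ‖X ω‖ ^ 2 := mul_le_mul_of_nonneg_right (le_abs_self M) (by positivity)

lemma dot_entry_integral (hX : Measurable X) (hX2 : Integrable (fun ω => ‖X ω‖ ^ 2) P)
    {c : Ω → ℝ} (hc : Measurable c) {M : ℝ} (hM : ∀ᵐ ω ∂P, |c ω| ≤ M) (u v : Fin m → ℝ) :
    u ⬝ᵥ (Matrix.of fun i j => ∫ ω, c ω * X ω i * X ω j ∂P).mulVec v
      = ∫ ω, c ω * (u ⬝ᵥ X ω) * (v ⬝ᵥ X ω) ∂P := by
  have hint : ∀ i j : Fin m, Integrable (fun ω => c ω * X ω i * X ω j) P :=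
    intble_entry hX hX2 hc hM
  have : ∀ i : Fin m, u i * ((Matrix.of fun i j => ∫ ω, c ω * X ω i * X ω j ∂P).mulVec v i)
      = ∫ ω, ∑ j, u i * (v j * (c ω * X ω i * X ω j)) ∂P := by
    intro i
    rw [integral_finset_sum _ (fun j _ => ((hint i j).const_mul (v j)).const_mul (u i))]
    simp only [mulVec, dotProduct, Matrix.of_apply, Finset.mul_sum]
    congr 1; ext j
    rw [← integral_mul_const, ← integral_const_mul]
    congr 1; ext ω; ring
  simp only [dotProduct]
  rw [Finset.sum_congr rfl (fun i _ => this i),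
    ← integral_finset_sum _ (fun i _ => integrable_finset_sum _
      (fun j _ => (((hint i j).const_mul (v j)).const_mul (u i))))]
  congr 1; ext ω
  rw [mul_assoc, Finset.sum_mul_sum, Finset.mul_sum]
  refine Finset.sum_congr rfl fun i _ => ?_
  rw [Finset.mul_sum]
  exact Finset.sum_congr rfl fun j _ => by ring

lemma memL2_dot (hX : Measurable X) (hX2 : Integrable (fun ω => ‖X ω‖ ^ 2) P)
    {c : Ω → ℝ} (hc : Measurable c) {M : ℝ} (hM : ∀ᵐ ω ∂P, |c ω| ≤ M) (u : Fin m → ℝ) :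
    MemLp (fun ω => c ω * (u ⬝ᵥ X ω)) 2 P := by
  have hmeas : Measurable fun ω => c ω * (u ⬝ᵥ X ω) := by
    apply hc.mul
    exact Finset.measurable_sum _ fun i _ =>
      (measurable_const.mul ((measurable_pi_apply i).comp hX))
  rw [memLp_two_iff_integrable_sq hmeas.aestronglyMeasurable]
  set C : ℝ := ∑ i, |u i|
  have hC : 0 ≤ C := Finset.sum_nonneg fun i _ => abs_nonneg _
  refine (hX2.const_mul (M^2 * C^2)).mono (hmeas.pow_const 2).aestronglyMeasurable ?_
  filter_upwards [hM] with ω hMω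
  have hM0 : 0 ≤ M := le_trans (abs_nonneg _) hMω
  have hdot : |u ⬝ᵥ X ω| ≤ C * ‖X ω‖ := by
    calc |u ⬝ᵥ X ω| ≤ ∑ i, |u i * X ω i| := Finset.abs_sum_le_sum_abs _ _
      _ ≤ ∑ i, |u i| * ‖X ω‖ := by
          refine Finset.sum_le_sum fun i _ => ?_
          rw [abs_mul]
          exact mul_le_mul_of_nonneg_left (norm_le_pi_norm (X ω) i) (abs_nonneg _)
      _ = C * ‖X ω‖ := by rw [← Finset.sum_mul]
  rw [Real.norm_eq_abs, Real.norm_eq_abs, abs_of_nonneg (by positivity : (0:ℝ) ≤ M^2 * C^2 * ‖X ω‖^2), abs_pow, abs_mul]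
  have h1 : |c ω| * |u ⬝ᵥ X ω| ≤ M * (C * ‖X ω‖) :=
    mul_le_mul hMω hdot (abs_nonneg _) hM0
  calc (|c ω| * |u ⬝ᵥ X ω|) ^ 2 ≤ (M * (C * ‖X ω‖)) ^ 2 := by
        apply pow_le_pow_left₀ (by positivity) h1
    _ = M ^ 2 * C ^ 2 * ‖X ω‖ ^ 2 := by ring

end helpers

lemma sq_integral_mul_le' {Ω : Type*} [MeasurableSpace Ω] {P : Measure Ω}
    {f g : Ω → ℝ} (hf : MemLp f 2 P) (hg : MemLp g 2 P) :
    (∫ ω, f ω * g ω ∂P) ^ 2 ≤ (∫ ω, f ω ^ 2 ∂P) * (∫ ω, g ω ^ 2 ∂P) := by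
  have h := real_inner_mul_inner_self_le (hf.toLp f) (hg.toLp g)
  have hfg : inner (𝕜 := ℝ) (hf.toLp f) (hg.toLp g) = ∫ ω, f ω * g ω ∂P := by
    rw [L2.inner_def]
    refine integral_congr_ae ?_
    filter_upwards [hf.coeFn_toLp, hg.coeFn_toLp] with ω h1 h2
    simp [h1, h2, RCLike.inner_apply, mul_comm]
  have hff : inner (𝕜 := ℝ) (hf.toLp f) (hf.toLp f) = ∫ ω, f ω ^ 2 ∂P := by
    rw [L2.inner_def]
    refine integral_congr_ae ?_
    filter_upwards [hf.coeFn_toLp] with ω h1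
    simp [h1, RCLike.inner_apply, sq]
  have hgg : inner (𝕜 := ℝ) (hg.toLp g) (hg.toLp g) = ∫ ω, g ω ^ 2 ∂P := by
    rw [L2.inner_def]
    refine integral_congr_ae ?_
    filter_upwards [hg.coeFn_toLp] with ω h1
    simp [h1, RCLike.inner_apply, sq]
  rw [hfg, hff, hgg] at h
  nlinarith [h]

lemma quad_sandwich {m : ℕ} (N Q : Matrix (Fin m) (Fin m) ℝ) (hN : Nᵀ = N) (x : Fin m → ℝ) :
    x ⬝ᵥ (N * Q * N).mulVec x = (N.mulVec x) ⬝ᵥ Q.mulVec (N.mulVec x) := by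
  rw [← mulVec_mulVec, ← mulVec_mulVec, dotProduct_mulVec, ← mulVec_transpose, hN]


/-- Pure ARMA case: the local QMELE is asymptotically at least as efficient as the
self-weighted QMELE, i.e. `Σ₀⁻¹ Ω₀ Σ₀⁻¹ - Σ⁻¹ Ωm Σ⁻¹` is positive semidefinite,
where `Ω₀ = E[w² X Xᵀ]`, `Σ₀ = g₀ E[w X Xᵀ]`, `Ωm = E[X Xᵀ]`, `Σ = g₀ Ωm`. -/
theorem selfweighted_vs_local_qmele_arma
    {Ω : Type*} [MeasurableSpace Ω] (P : Measure Ω) [IsProbabilityMeasure P]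
    (m : ℕ) (X : Ω → Fin m → ℝ) (hX : Measurable X)
    (hX2 : Integrable (fun ω => ‖X ω‖ ^ 2) P)
    (w : Ω → ℝ) (hw : Measurable w) (K : ℝ)
    (hw0 : ∀ᵐ ω ∂P, 0 ≤ w ω) (hwK : ∀ᵐ ω ∂P, w ω ≤ K)
    (g₀ : ℝ) (hg₀ : 0 < g₀)
    (O0 S0 Om S : Matrix (Fin m) (Fin m) ℝ)
    (hO0 : O0 = Matrix.of fun i j => ∫ ω, (w ω) ^ 2 * X ω i * X ω j ∂P)
    (hS0 : S0 = g₀ • Matrix.of fun i j => ∫ ω, w ω * X ω i * X ω j ∂P)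
    (hOm : Om = Matrix.of fun i j => ∫ ω, X ω i * X ω j ∂P)
    (hS : S = g₀ • Om)
    (hO0pd : O0.PosDef) (hOmpd : Om.PosDef) (hS0inv : IsUnit S0.det) :
    (S0⁻¹ * O0 * S0⁻¹ - S⁻¹ * Om * S⁻¹).PosSemidef := by
  -- a.e. bounds
  set K' := max K 0 with hK'
  have hwb : ∀ᵐ ω ∂P, |w ω| ≤ K' := by
    filter_upwards [hw0, hwK] with ω h0 hK
    rw [abs_of_nonneg h0]; exact le_trans hK (le_max_left _ _)
  have hw2b : ∀ᵐ ω ∂P, |w ω ^ 2| ≤ K' ^ 2 := by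
    filter_upwards [hwb] with ω h
    rw [abs_pow]; exact pow_le_pow_left₀ (abs_nonneg _) h 2
  have h1b : ∀ᵐ ω ∂P, |(1 : ℝ)| ≤ (1 : ℝ) := ae_of_all _ (by norm_num)
  set Aw : Matrix (Fin m) (Fin m) ℝ := Matrix.of fun i j => ∫ ω, w ω * X ω i * X ω j ∂P with hAw
  have hOm1 : Om = Matrix.of fun i j => ∫ ω, (1 : ℝ) * X ω i * X ω j ∂P := by
    rw [hOm]; congr 1; ext i j; congr 1; ext ω; ring
  -- symmetry
  have hO0s : O0ᵀ = O0 := by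
    rw [hO0]; ext i j
    show (∫ ω, w ω ^ 2 * X ω j * X ω i ∂P) = ∫ ω, w ω ^ 2 * X ω i * X ω j ∂P
    congr 1; ext ω; ring
  have hAws : Awᵀ = Aw := by
    ext i j
    show (∫ ω, w ω * X ω j * X ω i ∂P) = ∫ ω, w ω * X ω i * X ω j ∂P
    congr 1; ext ω; ring
  have hOms : Omᵀ = Om := by
    rw [hOm]; ext i j
    show (∫ ω, X ω j * X ω i ∂P) = ∫ ω, X ω i * X ω j ∂P
    congr 1; ext ω; ring
  have hS0s : S0ᵀ = S0 := by rw [hS0, Matrix.transpose_smul, hAws]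
  have hSs : Sᵀ = S := by rw [hS, Matrix.transpose_smul, hOms]
  have hS0is : (S0⁻¹)ᵀ = S0⁻¹ := by rw [Matrix.transpose_nonsing_inv, hS0s]
  have hSis : (S⁻¹)ᵀ = S⁻¹ := by rw [Matrix.transpose_nonsing_inv, hSs]
  -- invertibility of S
  have hSdet : IsUnit S.det := by
    rw [hS, Matrix.det_smul]
    exact (IsUnit.pow _ (isUnit_iff_ne_zero.mpr (ne_of_gt hg₀))).mul
      (isUnit_iff_ne_zero.mpr (ne_of_gt hOmpd.det_pos))
  rw [posSemidef_iff_dotProduct_mulVec]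
  constructor
  · -- Hermitian
    have herm : ∀ (M : Matrix (Fin m) (Fin m) ℝ), Mᵀ = M → M.IsHermitian := fun M h => by
      rwa [Matrix.IsHermitian, Matrix.conjTranspose_eq_transpose_of_trivial]
    apply Matrix.IsHermitian.sub
    · apply herm
      rw [Matrix.transpose_mul, Matrix.transpose_mul, hS0is, hO0s, ← Matrix.mul_assoc]
    · apply herm
      rw [Matrix.transpose_mul, Matrix.transpose_mul, hSis, hOms, ← Matrix.mul_assoc]
  intro x
  have hstar : star x = x := by simp
  rw [hstar, Matrix.sub_mulVec, dotProduct_sub,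
    quad_sandwich _ _ hS0is, quad_sandwich _ _ hSis]
  set u : Fin m → ℝ := S0⁻¹.mulVec x with hu
  set v : Fin m → ℝ := S⁻¹.mulVec x with hv
  -- integral representations
  have hI2 : u ⬝ᵥ O0.mulVec u = ∫ ω, w ω ^ 2 * (u ⬝ᵥ X ω) * (u ⬝ᵥ X ω) ∂P := by
    rw [hO0]; exact dot_entry_integral hX hX2 (hw.pow_const 2) hw2b u u
  have hI3 : v ⬝ᵥ Om.mulVec v = ∫ ω, (1 : ℝ) * (v ⬝ᵥ X ω) * (v ⬝ᵥ X ω) ∂P := by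
    rw [hOm1]; exact dot_entry_integral hX hX2 measurable_const h1b v v
  have hI1 : u ⬝ᵥ Aw.mulVec v = ∫ ω, w ω * (u ⬝ᵥ X ω) * (v ⬝ᵥ X ω) ∂P :=
    dot_entry_integral hX hX2 hw hwb u v
  set I1 : ℝ := ∫ ω, w ω * (u ⬝ᵥ X ω) * (v ⬝ᵥ X ω) ∂P with hI1d
  set I2 : ℝ := ∫ ω, w ω ^ 2 * (u ⬝ᵥ X ω) * (u ⬝ᵥ X ω) ∂P with hI2d
  set I3 : ℝ := ∫ ω, (1 : ℝ) * (v ⬝ᵥ X ω) * (v ⬝ᵥ X ω) ∂P with hI3d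
  -- Cauchy–Schwarz
  have hcs : I1 ^ 2 ≤ I2 * I3 := by
    have hf : MemLp (fun ω => w ω * (u ⬝ᵥ X ω)) 2 P := memL2_dot hX hX2 hw hwb u
    have hg : MemLp (fun ω => (1 : ℝ) * (v ⬝ᵥ X ω)) 2 P :=
      memL2_dot hX hX2 measurable_const h1b v
    have h := sq_integral_mul_le' hf hg
    have e1 : (∫ ω, (w ω * (u ⬝ᵥ X ω)) * ((1 : ℝ) * (v ⬝ᵥ X ω)) ∂P) = I1 := by
      rw [hI1d]; congr 1; ext ω; ring
    have e2 : (∫ ω, (w ω * (u ⬝ᵥ X ω)) ^ 2 ∂P) = I2 := by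
      rw [hI2d]; congr 1; ext ω; ring
    have e3 : (∫ ω, ((1 : ℝ) * (v ⬝ᵥ X ω)) ^ 2 ∂P) = I3 := by
      rw [hI3d]; congr 1; ext ω; ring
    rwa [e1, e2, e3] at h
  -- the key identity: g₀ * I1 = x ⬝ᵥ v = g₀ * I3
  have hxv1 : u ⬝ᵥ S0.mulVec v = x ⬝ᵥ v := by
    rw [dotProduct_mulVec, ← mulVec_transpose, hS0s, hu, mulVec_mulVec,
      Matrix.mul_nonsing_inv _ hS0inv, one_mulVec]
  have hxv2 : v ⬝ᵥ S.mulVec v = x ⬝ᵥ v := by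
    conv_lhs => rw [hv, mulVec_mulVec, Matrix.mul_nonsing_inv _ hSdet, one_mulVec]
    exact dotProduct_comm _ _
  have hL : u ⬝ᵥ S0.mulVec v = g₀ * I1 := by
    rw [hS0, smul_mulVec, dotProduct_smul, smul_eq_mul, hI1]
  have hR : v ⬝ᵥ S.mulVec v = g₀ * I3 := by
    rw [hS, smul_mulVec, dotProduct_smul, smul_eq_mul, hI3]
  have hI13 : I1 = I3 := by
    have : g₀ * I1 = g₀ * I3 := by rw [← hL, ← hR, hxv1, hxv2]
    exact mul_left_cancel₀ (ne_of_gt hg₀) this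
  have hI3nn : 0 ≤ I3 := by
    rw [← hI3]
    have := hOmpd.posSemidef.dotProduct_mulVec_nonneg v
    rwa [show star v = v by simp] at this
  have hI2nn : 0 ≤ I2 := by
    rw [← hI2]
    have := hO0pd.posSemidef.dotProduct_mulVec_nonneg u
    rwa [show star u = u by simp] at this
  rw [hI2, hI3]
  show (0 : ℝ) ≤ I2 - I3
  nlinarith [hcs, hI13, hI3nn, hI2nn]
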